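/- Let G be the group of 3×3 upper unitriangular matrices over ℤ/8ℤ (matrices with 1's on the diagonal and 0's below the diagonal) and H the corresponding group over ℤ/2ℤ, and let ν : G → H be the entrywise reduction map modulo 2. Let g₁ = I + δ₁₂ and g₂ = I + δ₂₃ in G. Then for all a, b ∈ G with ν(a) = ν(g₁) and ν(b) = ν(g₂), the elements a² and b² do not commute: a²·b² ≠ b²·a². -/

import Mathlib

/-- A 3×3 matrix is upper unitriangular if it has 1's on the diagonal and 0's below it. -/
def IsUnitriangular {R : Type*} [CommRing R] (M : Matrix (Fin 3) (Fin 3) R) : Prop :=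
  (∀ i, M i i = 1) ∧ (∀ i j : Fin 3, j < i → M i j = 0)

lemma key : ∀ x z u w : ZMod 8,
    ZMod.castHom (show (2:ℕ) ∣ 8 by norm_num) (ZMod 2) x = 1 →
    ZMod.castHom (show (2:ℕ) ∣ 8 by norm_num) (ZMod 2) z = 0 →
    ZMod.castHom (show (2:ℕ) ∣ 8 by norm_num) (ZMod 2) u = 0 →
    ZMod.castHom (show (2:ℕ) ∣ 8 by norm_num) (ZMod 2) w = 1 →
    4*x*w ≠ 4*u*z := by decide

/-- In the group of 3×3 upper unitriangular matrices over `ℤ/8ℤ`, with `ν` the entrywise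
reduction modulo 2 to the unitriangular group over `ℤ/2ℤ`, and `g₁ = I + δ₁₂`,
`g₂ = I + δ₂₃`: for all unitriangular `a, b` over `ℤ/8ℤ` with `ν a = ν g₁` and
`ν b = ν g₂`, the squares `a²` and `b²` do not commute. -/
theorem sq_not_commute_of_lift_unitriangular
    (a b : Matrix (Fin 3) (Fin 3) (ZMod 8))
    (ha : IsUnitriangular a) (hb : IsUnitriangular b)
    (hared : a.map (ZMod.castHom (show (2:ℕ) ∣ 8 by norm_num) (ZMod 2)) =
      (1 + Matrix.single 0 1 (1 : ZMod 8)).map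
        (ZMod.castHom (show (2:ℕ) ∣ 8 by norm_num) (ZMod 2)))
    (hbred : b.map (ZMod.castHom (show (2:ℕ) ∣ 8 by norm_num) (ZMod 2)) =
      (1 + Matrix.single 1 2 (1 : ZMod 8)).map
        (ZMod.castHom (show (2:ℕ) ∣ 8 by norm_num) (ZMod 2))) :
    a ^ 2 * b ^ 2 ≠ b ^ 2 * a ^ 2 := by
  obtain ⟨had, halo⟩ := ha
  obtain ⟨hbd, hblo⟩ := hb
  have hx := congrFun (congrFun hared 0) 1
  have hz := congrFun (congrFun hared 1) 2
  have hu := congrFun (congrFun hbred 0) 1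
  have hw := congrFun (congrFun hbred 1) 2
  simp [Matrix.map_apply, Matrix.one_apply, Matrix.single_apply_same,
    Matrix.single_apply_of_ne] at hx hz hu hw
  intro h
  have h02 := congrFun (congrFun h 0) 2
  have e10 : a 1 0 = 0 := halo 1 0 (by decide)
  have e20 : a 2 0 = 0 := halo 2 0 (by decide)
  have e21 : a 2 1 = 0 := halo 2 1 (by decide)
  have f10 : b 1 0 = 0 := hblo 1 0 (by decide)
  have f20 : b 2 0 = 0 := hblo 2 0 (by decide)
  have f21 : b 2 1 = 0 := hblo 2 1 (by decide)
  simp [pow_two, Matrix.mul_apply, Fin.sum_univ_three, had, hbd, e10, e20, e21,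
    f10, f20, f21] at h02
  exact key (a 0 1) (a 1 2) (b 0 1) (b 1 2) hx hz hu hw (by linear_combination h02)
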